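/- If the cutset hypergraph of a graph G is 1-Sperner (i.e., any two distinct minimal cutsets S, S' of G satisfy min(|S \ S'|, |S' \ S|) = 1), then G is connected-domishold. -/

import Mathlib

open SimpleGraph Finset BigOperators

variable {V : Type*} [Fintype V] [DecidableEq V]

/-- `S` is a connected dominating set of `G`: every vertex is in `S` or has a neighbor in `S`,
and any two vertices of `S` are joined by a walk staying inside `S`
(i.e. `S` induces a connected subgraph). -/
def SimpleGraph.IsCDSet (G : SimpleGraph V) (S : Finset V) : Prop :=
  (∀ v : V, v ∈ S ∨ ∃ u ∈ S, G.Adj u v) ∧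
  ∀ u ∈ S, ∀ v ∈ S, ∃ p : G.Walk u v, ∀ x ∈ p.support, x ∈ S

/-- `(w, t)` is a connected-domishold structure of `G`. -/
def SimpleGraph.IsCDStructure (G : SimpleGraph V) (w : V → ℝ) (t : ℝ) : Prop :=
  (∀ v, 0 ≤ w v) ∧ 0 ≤ t ∧ ∀ S : Finset V, (t ≤ ∑ x ∈ S, w x) ↔ G.IsCDSet S

/-- `G` is connected-domishold. -/
def SimpleGraph.ConnectedDomishold (G : SimpleGraph V) : Prop :=
  ∃ (w : V → ℝ) (t : ℝ), G.IsCDStructure w t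

/-- `S` is a cutset of `G`: `G - S` is disconnected, i.e. there exist two vertices outside `S`
such that every walk between them meets `S`. -/
def SimpleGraph.IsCutset (G : SimpleGraph V) (S : Finset V) : Prop :=
  ∃ u v : V, u ∉ S ∧ v ∉ S ∧ u ≠ v ∧ ∀ p : G.Walk u v, ∃ x ∈ p.support, x ∈ S

/-- `S` is a minimal cutset of `G`. -/
def SimpleGraph.IsMinCutset (G : SimpleGraph V) (S : Finset V) : Prop :=
  G.IsCutset S ∧ ∀ S' ⊆ S, G.IsCutset S' → S' = S

/-- A hypergraph on vertex set `V`, given by its hyperedge predicate `Eh`, is threshold. -/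
def HypThreshold (Eh : Finset V → Prop) : Prop :=
  ∃ (w : V → ℝ) (t : ℝ), (∀ v, 0 ≤ w v) ∧ 0 ≤ t ∧
    ∀ X : Finset V, (∑ v ∈ X, w v ≤ t) ↔ ∀ e, Eh e → ¬ e ⊆ X

def HypOneSperner (Eh : Finset V → Prop) : Prop :=
  ∀ e f, Eh e → Eh f → e ≠ f → min (e \ f).card (f \ e).card = 1

def HypTwoSummable (Eh : Finset V → Prop) : Prop :=
  ∃ A₁ A₂ B₁ B₂ : Finset V,
    (∃ e, Eh e ∧ e ⊆ A₁) ∧ (∃ e, Eh e ∧ e ⊆ A₂) ∧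
    (∀ e, Eh e → ¬ e ⊆ B₁) ∧ (∀ e, Eh e → ¬ e ⊆ B₂) ∧
    ∀ v : V, ((if v ∈ A₁ then 1 else 0) + (if v ∈ A₂ then 1 else 0) : ℕ)
           = (if v ∈ B₁ then 1 else 0) + (if v ∈ B₂ then 1 else 0)

set_option linter.unusedSectionVars false

private lemma sdiff_singleton_of_sperner {E : Finset (Finset V)}
    (hsp : ∀ e ∈ E, ∀ f ∈ E, e ≠ f → min (e \ f).card (f \ e).card = 1)
    {s t : Finset V} (hs : s ∈ E) (ht : t ∈ E) (hne : s ≠ t) (hc : s.card ≤ t.card) :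
    ∃ x, s \ t = {x} := by
  have h1 := Finset.card_sdiff_add_card_inter s t
  have h2 := Finset.card_sdiff_add_card_inter t s
  have h3 : (s ∩ t).card = (t ∩ s).card := by rw [Finset.inter_comm]
  have hle : (s \ t).card ≤ (t \ s).card := by omega
  have hm := hsp s hs t ht hne
  rw [min_eq_left hle] at hm
  exact Finset.card_eq_one.mp hm

private lemma mem_of_sdiff_singleton {s t : Finset V} {x p : V} (h : s \ t = {x})
    (hp : p ∈ s) (hpt : p ∉ t) : p = x := by
  have : p ∈ s \ t := Finset.mem_sdiff.mpr ⟨hp, hpt⟩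
  rw [h] at this
  exact Finset.mem_singleton.mp this

private lemma exists_splitter (E : Finset (Finset V))
    (hsp : ∀ e ∈ E, ∀ f ∈ E, e ≠ f → min (e \ f).card (f \ e).card = 1)
    (hne : E.Nonempty) (h0 : ∅ ∉ E) :
    ∃ z, (∃ e ∈ E, z ∈ e) ∧ ∀ e ∈ E, z ∈ e → ∀ f ∈ E, z ∉ f → e.card ≤ f.card := by
  by_cases htot : ∃ z, ∀ e ∈ E, z ∈ e
  · obtain ⟨z, hz⟩ := htot
    obtain ⟨e0, he0⟩ := hne
    exact ⟨z, ⟨e0, he0, hz e0 he0⟩, fun e he hze f hf hzf => absurd (hz f hf) hzf⟩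
  push_neg at htot
  classical
  set U : Finset V := E.sup id with hU
  have hmemU : ∀ {v : V}, v ∈ U ↔ ∃ e ∈ E, v ∈ e := by
    intro v; simp [hU, Finset.mem_sup]
  obtain ⟨e0, he0⟩ := hne
  have he0ne : e0.Nonempty := Finset.nonempty_iff_ne_empty.mpr (by rintro rfl; exact h0 he0)
  obtain ⟨v0, hv0⟩ := he0ne
  have hUne : U.Nonempty := ⟨v0, hmemU.mpr ⟨e0, he0, hv0⟩⟩
  set a : V → ℕ := fun v => (E.filter (fun e => v ∈ e)).sup Finset.card with ha
  set b : V → ℕ := fun v => sInf {k : ℕ | ∃ f ∈ E, v ∉ f ∧ f.card = k} with hb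
  have hbset : ∀ v : V, {k : ℕ | ∃ f ∈ E, v ∉ f ∧ f.card = k}.Nonempty := fun v => by
    obtain ⟨f, hf, hvf⟩ := htot v; exact ⟨f.card, f, hf, hvf, rfl⟩
  have hbmem : ∀ v : V, ∃ f ∈ E, v ∉ f ∧ f.card = b v := fun v => Nat.sInf_mem (hbset v)
  have hble : ∀ (v : V), ∀ f ∈ E, v ∉ f → b v ≤ f.card := fun v f hf hvf =>
    Nat.sInf_le ⟨f, hf, hvf, rfl⟩
  have hale : ∀ (v : V), ∀ e ∈ E, v ∈ e → e.card ≤ a v := fun v e he hv =>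
    Finset.le_sup (Finset.mem_filter.mpr ⟨he, hv⟩)
  have hamem : ∀ v ∈ U, ∃ e ∈ E, v ∈ e ∧ e.card = a v := by
    intro v hv
    obtain ⟨e, he, hve⟩ := hmemU.mp hv
    obtain ⟨e', he', hsup⟩ := Finset.exists_mem_eq_sup (E.filter (fun e => v ∈ e))
      ⟨e, Finset.mem_filter.mpr ⟨he, hve⟩⟩ Finset.card
    obtain ⟨he'E, hve'⟩ := Finset.mem_filter.mp he'
    exact ⟨e', he'E, hve', hsup.symm⟩
  -- two-stage selection: minimize a, then maximize b
  obtain ⟨z0, hz0U, hz0min⟩ := U.exists_min_image a hUne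
  set C := U.filter (fun v => a v = a z0) with hC
  have hCne : C.Nonempty := ⟨z0, Finset.mem_filter.mpr ⟨hz0U, rfl⟩⟩
  obtain ⟨z, hzC, hzmax⟩ := C.exists_max_image b hCne
  obtain ⟨hzU, haz⟩ := Finset.mem_filter.mp hzC
  refine ⟨z, hmemU.mp hzU, ?_⟩
  by_contra hbad
  push_neg at hbad
  obtain ⟨e1, he1, hze1, f1, hf1, hzf1, hlt1⟩ := hbad
  obtain ⟨e, heE, hze, hae⟩ := hamem z hzU
  obtain ⟨f, hfE, hzf, hbf⟩ := hbmem z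
  have hfe : f.card < e.card := by
    have h4 := hble z f1 hf1 hzf1
    have h5 := hale z e1 he1 hze1
    omega
  have hfne : f ≠ e := fun h => hzf (h ▸ hze)
  obtain ⟨y, hy⟩ := sdiff_singleton_of_sperner hsp hfE heE hfne (le_of_lt hfe)
  have hyfe : y ∈ f \ e := by rw [hy]; exact Finset.mem_singleton_self y
  have hyf : y ∈ f := (Finset.mem_sdiff.mp hyfe).1
  have hyne : y ∉ e := (Finset.mem_sdiff.mp hyfe).2
  have hyU : y ∈ U := hmemU.mpr ⟨f, hfE, hyf⟩
  -- Step A : every edge containing y has card ≤ e.card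
  have hAy : ∀ t ∈ E, y ∈ t → t.card ≤ e.card := by
    intro t htE hyt
    by_contra hgt
    push_neg at hgt
    have hzt : z ∉ t := by
      intro hzt
      have := hale z t htE hzt
      omega
    have hfnet : f ≠ t := by intro h; rw [h] at hfe; omega
    obtain ⟨p, hp⟩ := sdiff_singleton_of_sperner hsp hfE htE hfnet (by omega)
    have hpft : p ∈ f \ t := by rw [hp]; exact Finset.mem_singleton_self p
    have hpf : p ∈ f := (Finset.mem_sdiff.mp hpft).1
    have hpt : p ∉ t := (Finset.mem_sdiff.mp hpft).2
    have hpy : p ≠ y := fun h => hpt (h ▸ hyt)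
    have hpe : p ∈ e := by
      by_contra hpe
      exact hpy (mem_of_sdiff_singleton hy hpf hpe)
    have hent : e ≠ t := fun h => hyne (h ▸ hyt)
    obtain ⟨q, hq⟩ := sdiff_singleton_of_sperner hsp heE htE hent (by omega)
    have hzq : z = q := mem_of_sdiff_singleton hq hze hzt
    have hpq : p = q := mem_of_sdiff_singleton hq hpe hpt
    exact hzf (hzq ▸ hpq ▸ hpf)
  have hay : a y ≤ a z := by
    rw [← hae]
    exact Finset.sup_le (fun t ht => by
      obtain ⟨htE, hyt⟩ := Finset.mem_filter.mp ht
      exact hAy t htE hyt)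
  have hayeq : a y = a z0 := le_antisymm (haz ▸ hay) (hz0min y hyU)
  have hyC : y ∈ C := Finset.mem_filter.mpr ⟨hyU, hayeq⟩
  have hby : b y ≤ b z := hzmax y hyC
  obtain ⟨g, hgE, hyg, hgb⟩ := hbmem y
  have hgf : g.card ≤ f.card := by
    have : b z = f.card := hbf.symm
    omega
  by_cases hzg : z ∈ g
  · have hgnef : g ≠ f := fun h => hzf (h ▸ hzg)
    obtain ⟨x, hx⟩ := sdiff_singleton_of_sperner hsp hgE hfE hgnef hgf
    have hgfz : g \ f = {z} := by
      have := mem_of_sdiff_singleton hx hzg hzf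
      rw [hx, this]
    have hgne : g ≠ e := by intro h; rw [h] at hgf; omega
    obtain ⟨x', hx'⟩ := sdiff_singleton_of_sperner hsp hgE heE hgne (by omega)
    have hx'ge : x' ∈ g \ e := by rw [hx']; exact Finset.mem_singleton_self x'
    have hx'g : x' ∈ g := (Finset.mem_sdiff.mp hx'ge).1
    have hx'e : x' ∉ e := (Finset.mem_sdiff.mp hx'ge).2
    have hx'z : x' ≠ z := fun h => hx'e (h ▸ hze)
    have hx'f : x' ∈ f := by
      by_contra hx'f
      exact hx'z (mem_of_sdiff_singleton hgfz hx'g hx'f)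
    exact hyg ((mem_of_sdiff_singleton hy hx'f hx'e) ▸ hx'g)
  · have hfg : f.card ≤ g.card := by
      have := hble z g hgE hzg
      omega
    have hgcard : g.card = f.card := le_antisymm hgf hfg
    have hgnef : g ≠ f := fun h => hyg (h ▸ hyf)
    obtain ⟨y', hy'⟩ := sdiff_singleton_of_sperner hsp hfE hgE (Ne.symm hgnef) hfg
    have hfgy : f \ g = {y} := by
      have := mem_of_sdiff_singleton hy' hyf hyg
      rw [hy', this]
    obtain ⟨x, hx⟩ := sdiff_singleton_of_sperner hsp hgE hfE hgnef hgf
    have hxgf : x ∈ g \ f := by rw [hx]; exact Finset.mem_singleton_self x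
    have hxg : x ∈ g := (Finset.mem_sdiff.mp hxgf).1
    have hxf : x ∉ f := (Finset.mem_sdiff.mp hxgf).2
    -- x ∉ e
    have hgne : g ≠ e := by intro h; rw [h] at hgcard; omega
    obtain ⟨x'', hx''⟩ := sdiff_singleton_of_sperner hsp hgE heE hgne (by omega)
    have hx''ge : x'' ∈ g \ e := by rw [hx'']; exact Finset.mem_singleton_self x''
    have hx''g : x'' ∈ g := (Finset.mem_sdiff.mp hx''ge).1
    have hx''e : x'' ∉ e := (Finset.mem_sdiff.mp hx''ge).2
    have hxx : x'' = x := by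
      by_contra hne'
      have hx''f : x'' ∈ f := by
        by_contra hx''f
        exact hne' (mem_of_sdiff_singleton hx hx''g hx''f)
      exact hyg ((mem_of_sdiff_singleton hy hx''f hx''e) ▸ hx''g)
    have hxe : x ∉ e := hxx ▸ hx''e
    -- a-attainment at y
    obtain ⟨t, htE, hyt, hta⟩ := hamem y hyU
    have htcard : t.card = e.card := by rw [hta, hayeq, ← haz, ← hae]
    have hfnt : f ≠ t := by intro h; rw [h] at hfe; omega
    obtain ⟨p, hp⟩ := sdiff_singleton_of_sperner hsp hfE htE hfnt (by omega)
    have hpft : p ∈ f \ t := by rw [hp]; exact Finset.mem_singleton_self p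
    have hpf : p ∈ f := (Finset.mem_sdiff.mp hpft).1
    have hpt : p ∉ t := (Finset.mem_sdiff.mp hpft).2
    have hpy : p ≠ y := fun h => hpt (h ▸ hyt)
    have hpe : p ∈ e := by
      by_contra hpe
      exact hpy (mem_of_sdiff_singleton hy hpf hpe)
    have hpg : p ∈ g := by
      by_contra hpg
      exact hpy (mem_of_sdiff_singleton hfgy hpf hpg)
    have hent : e ≠ t := fun h => hyne (h ▸ hyt)
    obtain ⟨q, hq⟩ := sdiff_singleton_of_sperner hsp heE htE hent (by omega)
    have hqp : p = q := mem_of_sdiff_singleton hq hpe hpt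
    have hetp : e \ t = {p} := by rw [hq, hqp]
    have hgnt : g ≠ t := by intro h; rw [h] at hgcard; omega
    obtain ⟨r, hr⟩ := sdiff_singleton_of_sperner hsp hgE htE hgnt (by omega)
    have hrp : p = r := mem_of_sdiff_singleton hr hpg hpt
    have hxp : x ≠ p := fun h => hxf (h ▸ hpf)
    have hxt : x ∈ t := by
      by_contra hxt
      exact hxp (hrp ▸ mem_of_sdiff_singleton hr hxg hxt)
    -- counting contradiction
    have hyx : y ≠ x := fun h => hxf (h ▸ hyf)
    have hxep : x ∉ e.erase p := fun h => hxe (Finset.mem_of_mem_erase h)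
    have hyins : y ∉ insert x (e.erase p) := by
      simp only [Finset.mem_insert]
      rintro (h | h)
      · exact hyx h
      · exact hyne (Finset.mem_of_mem_erase h)
    have hsub : insert y (insert x (e.erase p)) ⊆ t := by
      intro u hu
      simp only [Finset.mem_insert] at hu
      rcases hu with rfl | rfl | hu
      · exact hyt
      · exact hxt
      · obtain ⟨hup, hue⟩ := Finset.mem_erase.mp hu
        by_contra hut
        exact hup (mem_of_sdiff_singleton hetp hue hut)
    have hcardle := Finset.card_le_card hsub
    have hc1 : (insert y (insert x (e.erase p))).card = e.card + 1 := by
      rw [Finset.card_insert_of_notMem hyins, Finset.card_insert_of_notMem hxep,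
        Finset.card_erase_of_mem hpe]
      have : 1 ≤ e.card := Finset.card_pos.mpr ⟨p, hpe⟩
      omega
    omega

private lemma erase_sdiff_erase' {e f : Finset V} {z : V} (hzf : z ∈ f) :
    e.erase z \ f.erase z = e \ f := by
  ext x
  simp only [Finset.mem_sdiff, Finset.mem_erase, not_and]
  constructor
  · rintro ⟨⟨hxz, hxe⟩, h⟩
    exact ⟨hxe, fun hxf => (h hxz) hxf⟩
  · rintro ⟨hxe, hxf⟩
    exact ⟨⟨fun heq => hxf (heq ▸ hzf), hxe⟩, fun _ hxf' => hxf hxf'⟩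

private lemma sdiff_sdiff_cancel' {f g s : Finset V} (hsg : s ⊆ g) :
    (f \ s) \ (g \ s) = f \ g := by
  ext x
  simp only [Finset.mem_sdiff, not_and, not_not]
  constructor
  · rintro ⟨⟨hxf, hxs⟩, h⟩
    exact ⟨hxf, fun hxg => hxs (h hxg)⟩
  · rintro ⟨hxf, hxg⟩
    exact ⟨⟨hxf, fun hxs => hxg (hsg hxs)⟩, fun hxg' => absurd hxg' hxg⟩

private lemma key_lemma (n : ℕ) : ∀ (E : Finset (Finset V)),
    (∑ e ∈ E, e.card) ≤ n →
    (∀ e ∈ E, ∀ f ∈ E, e ≠ f → min (e \ f).card (f \ e).card = 1) →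
    ∃ (w : V → ℝ) (θ : ℝ), (∀ v, 0 ≤ w v) ∧ (-1 ≤ θ) ∧
      (∀ v, (∀ e ∈ E, v ∉ e) → w v = 0) ∧
      (∀ e ∈ E, θ + 1 ≤ ∑ v ∈ e, w v) ∧
      (∀ X : Finset V, (∀ e ∈ E, ¬ e ⊆ X) → ∑ v ∈ X, w v ≤ θ) := by
  induction n with
  | zero =>
    intro E hm hsp
    by_cases hE : E = ∅
    · subst hE
      exact ⟨fun _ => 0, 0, fun v => le_refl 0, by norm_num, fun v _ => rfl,
        by simp, by simp⟩
    · obtain ⟨e0, he0⟩ := Finset.nonempty_iff_ne_empty.mpr hE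
      have h1 : e0.card ≤ ∑ e ∈ E, e.card :=
        Finset.single_le_sum (fun e _ => Nat.zero_le e.card) he0
      have h2 : e0 = ∅ := Finset.card_eq_zero.mp (by omega)
      refine ⟨fun _ => 0, -1, fun v => le_refl 0, le_refl _, fun v _ => rfl,
        fun e _ => by simp, fun X hX => absurd (Finset.empty_subset X) (hX ∅ (h2 ▸ he0))⟩
  | succ n ih =>
    intro E hm hsp
    by_cases hE : E = ∅
    · subst hE
      exact ⟨fun _ => 0, 0, fun v => le_refl 0, by norm_num, fun v _ => rfl,
        by simp, by simp⟩
    by_cases h0 : ∅ ∈ E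
    · refine ⟨fun _ => 0, -1, fun v => le_refl 0, le_refl _, fun v _ => rfl,
        fun e _ => by simp, fun X hX => absurd (Finset.empty_subset X) (hX ∅ h0)⟩
    have hEne : E.Nonempty := Finset.nonempty_iff_ne_empty.mpr hE
    obtain ⟨z, ⟨ez, hezE, hzez⟩, hzgood⟩ := exists_splitter E hsp hEne h0
    classical
    set A := E.filter (fun e => z ∈ e) with hA
    set B := E.filter (fun e => z ∉ e) with hB
    have hAE : ∀ e ∈ A, e ∈ E ∧ z ∈ e := fun e he => Finset.mem_filter.mp he
    have hBE : ∀ f ∈ B, f ∈ E ∧ z ∉ f := fun f hf => Finset.mem_filter.mp hf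
    have hAne : A.Nonempty := ⟨ez, Finset.mem_filter.mpr ⟨hezE, hzez⟩⟩
    have hsumAB : ∑ e ∈ A, e.card + ∑ e ∈ B, e.card = ∑ e ∈ E, e.card :=
      Finset.sum_filter_add_sum_filter_not E _ _
    set E1 := A.image (fun e => e.erase z) with hE1
    have hinjA : ∀ e ∈ A, ∀ f ∈ A, e.erase z = f.erase z → e = f := by
      intro e he f hf h
      rw [← Finset.insert_erase (hAE e he).2, ← Finset.insert_erase (hAE f hf).2, h]
    have hspE1 : ∀ e ∈ E1, ∀ f ∈ E1, e ≠ f → min (e \ f).card (f \ e).card = 1 := by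
      intro e1 he1 f1 hf1 hne
      obtain ⟨e, heA, rfl⟩ := Finset.mem_image.mp he1
      obtain ⟨f, hfA, rfl⟩ := Finset.mem_image.mp hf1
      have hef : e ≠ f := fun h => hne (h ▸ rfl)
      rw [erase_sdiff_erase' (hAE f hfA).2, erase_sdiff_erase' (hAE e heA).2]
      exact hsp e (hAE e heA).1 f (hAE f hfA).1 hef
    have hμ1' : ∑ e1 ∈ E1, e1.card = ∑ e ∈ A, (e.erase z).card := Finset.sum_image hinjA
    have hcardA : ∀ e ∈ A, (e.erase z).card + 1 = e.card := fun e he =>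
      Finset.card_erase_add_one (hAE e he).2
    have hμ1'' : ∑ e ∈ A, (e.erase z).card + A.card = ∑ e ∈ A, e.card := by
      rw [Finset.card_eq_sum_ones, ← Finset.sum_add_distrib]
      exact Finset.sum_congr rfl hcardA
    have hAcard : 1 ≤ A.card := Finset.card_pos.mpr hAne
    have hμ1 : ∑ e1 ∈ E1, e1.card ≤ n := by omega
    by_cases hBe : B = ∅
    · -- all edges contain z
      have hall : ∀ e ∈ E, z ∈ e := by
        intro e he
        by_contra hz
        have : e ∈ B := Finset.mem_filter.mpr ⟨he, hz⟩
        rw [hBe] at this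
        exact absurd this (Finset.notMem_empty e)
      have hAeqE : A = E := by
        apply Finset.filter_true_of_mem
        exact hall
      obtain ⟨w1, θ1, h1pos, h1neg1, h1supp, h1edge, h1free⟩ := ih E1 hμ1 hspE1
      set T1 : ℝ := ∑ v ∈ Finset.univ, w1 v with hT1def
      have hT1 : 0 ≤ T1 := Finset.sum_nonneg (fun v _ => h1pos v)
      have hsuble1 : ∀ X : Finset V, ∑ v ∈ X, w1 v ≤ T1 := fun X =>
        Finset.sum_le_sum_of_subset_of_nonneg (Finset.subset_univ X) (fun i _ _ => h1pos i)
      have hezE1 : ez.erase z ∈ E1 := Finset.mem_image.mpr ⟨ez, hAeqE ▸ hezE, rfl⟩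
      have hθ1T : θ1 ≤ T1 - 1 := by
        have h1 := h1edge _ hezE1
        have h2 := hsuble1 (ez.erase z)
        linarith
      have hw1z : w1 z = 0 := by
        apply h1supp
        intro e1 he1 hze1
        obtain ⟨e, _, rfl⟩ := Finset.mem_image.mp he1
        exact Finset.notMem_erase z e hze1
      refine ⟨fun v => w1 v + (if v = z then T1 - θ1 else 0), T1,
        ?_, by linarith, ?_, ?_, ?_⟩
      · intro v
        have := h1pos v
        dsimp only
        split_ifs <;> linarith
      · intro v hv
        have hvz : v ≠ z := fun h => hv ez hezE (h ▸ hzez)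
        dsimp only
        rw [if_neg hvz, add_zero]
        apply h1supp
        intro e1 he1 hve1
        obtain ⟨e, heA, rfl⟩ := Finset.mem_image.mp he1
        exact hv e (hAeqE ▸ heA) (Finset.mem_of_mem_erase hve1)
      · intro e he
        rw [Finset.sum_add_distrib, Finset.sum_ite_eq' e z (fun _ => T1 - θ1),
          if_pos (hall e he)]
        have h1 : ∑ v ∈ e.erase z, w1 v + w1 z = ∑ v ∈ e, w1 v :=
          Finset.sum_erase_add e w1 (hall e he)
        have h2 : θ1 + 1 ≤ ∑ v ∈ e.erase z, w1 v :=
          h1edge _ (Finset.mem_image.mpr ⟨e, hAeqE ▸ he, rfl⟩)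
        linarith
      · intro X hX
        rw [Finset.sum_add_distrib, Finset.sum_ite_eq' X z (fun _ => T1 - θ1)]
        by_cases hzX : z ∈ X
        · rw [if_pos hzX]
          have h1 : ∑ v ∈ X.erase z, w1 v + w1 z = ∑ v ∈ X, w1 v :=
            Finset.sum_erase_add X w1 hzX
          have h2 : ∑ v ∈ X.erase z, w1 v ≤ θ1 := by
            apply h1free
            intro e1 he1 hsub
            obtain ⟨e, heA, rfl⟩ := Finset.mem_image.mp he1
            refine hX e (hAeqE ▸ heA) ?_
            intro x hx
            by_cases hxz : x = z
            · exact hxz ▸ hzX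
            · exact Finset.mem_of_mem_erase (hsub (Finset.mem_erase.mpr ⟨hxz, hx⟩))
          linarith
        · rw [if_neg hzX, add_zero]
          exact hsuble1 X
    · -- main gluing case
      have hBne : B.Nonempty := Finset.nonempty_iff_ne_empty.mpr hBe
      obtain ⟨f0, hf0B⟩ := hBne
      set V1 := B.inf id with hV1
      have hV1f : ∀ f ∈ B, V1 ⊆ f := fun f hf => Finset.le_iff_subset.mp (Finset.inf_le hf)
      have hzV1 : z ∉ V1 := fun h => (hBE f0 hf0B).2 (hV1f f0 hf0B h)
      have hkey : ∀ e ∈ A, e.erase z ⊆ V1 := by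
        intro e heA
        have heE := (hAE e heA).1
        have hze := (hAE e heA).2
        rw [show (e.erase z ⊆ V1) = (e.erase z ≤ B.inf id) from rfl]
        apply Finset.le_inf
        intro f hfB
        have hfE := (hBE f hfB).1
        have hzf := (hBE f hfB).2
        have hef : e ≠ f := fun h => hzf (h ▸ hze)
        obtain ⟨x, hx⟩ := sdiff_singleton_of_sperner hsp heE hfE hef
          (hzgood e heE hze f hfE hzf)
        have hzx : z = x := mem_of_sdiff_singleton hx hze hzf
        refine Finset.le_iff_subset.mpr ?_
        intro u hu
        obtain ⟨huz, hue⟩ := Finset.mem_erase.mp hu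
        by_contra huf
        exact huz (hzx ▸ mem_of_sdiff_singleton hx hue huf)
      set E2 := B.image (fun f => f \ V1) with hE2
      have hinjB : ∀ f ∈ B, ∀ g ∈ B, f \ V1 = g \ V1 → f = g := by
        intro f hf g hg h
        rw [← Finset.sdiff_union_of_subset (hV1f f hf),
          ← Finset.sdiff_union_of_subset (hV1f g hg), h]
      have hspE2 : ∀ e ∈ E2, ∀ f ∈ E2, e ≠ f → min (e \ f).card (f \ e).card = 1 := by
        intro e2 he2 f2 hf2 hne
        obtain ⟨f, hfB, rfl⟩ := Finset.mem_image.mp he2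
        obtain ⟨g, hgB, rfl⟩ := Finset.mem_image.mp hf2
        have hfg : f ≠ g := fun h => hne (h ▸ rfl)
        rw [sdiff_sdiff_cancel' (hV1f g hgB), sdiff_sdiff_cancel' (hV1f f hfB)]
        exact hsp f (hBE f hfB).1 g (hBE g hgB).1 hfg
      have hμ2' : ∑ e2 ∈ E2, e2.card = ∑ f ∈ B, (f \ V1).card := Finset.sum_image hinjB
      have hAcard1 : 1 ≤ ∑ e ∈ A, e.card := by
        have h1 : ez ∈ A := Finset.mem_filter.mpr ⟨hezE, hzez⟩
        have h2 : 1 ≤ ez.card := Finset.card_pos.mpr ⟨z, hzez⟩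
        have h3 : ez.card ≤ ∑ e ∈ A, e.card :=
          Finset.single_le_sum (fun e _ => Nat.zero_le e.card) h1
        omega
      have hμ2 : ∑ e2 ∈ E2, e2.card ≤ n := by
        have h1 : ∑ f ∈ B, (f \ V1).card ≤ ∑ f ∈ B, f.card :=
          Finset.sum_le_sum (fun f _ => Finset.card_le_card Finset.sdiff_subset)
        omega
      obtain ⟨w1, θ1, h1pos, h1neg1, h1supp, h1edge, h1free⟩ := ih E1 hμ1 hspE1
      obtain ⟨w2, θ2, h2pos, h2neg1, h2supp, h2edge, h2free⟩ := ih E2 hμ2 hspE2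
      set T1 : ℝ := ∑ v ∈ Finset.univ, w1 v with hT1def
      set T2 : ℝ := ∑ v ∈ Finset.univ, w2 v with hT2def
      have hT1 : 0 ≤ T1 := Finset.sum_nonneg (fun v _ => h1pos v)
      have hT2 : 0 ≤ T2 := Finset.sum_nonneg (fun v _ => h2pos v)
      have hsuble1 : ∀ X : Finset V, ∑ v ∈ X, w1 v ≤ T1 := fun X =>
        Finset.sum_le_sum_of_subset_of_nonneg (Finset.subset_univ X) (fun i _ _ => h1pos i)
      have hsuble2 : ∀ X : Finset V, ∑ v ∈ X, w2 v ≤ T2 := fun X =>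
        Finset.sum_le_sum_of_subset_of_nonneg (Finset.subset_univ X) (fun i _ _ => h2pos i)
      have hezA : ez ∈ A := Finset.mem_filter.mpr ⟨hezE, hzez⟩
      have hezE1 : ez.erase z ∈ E1 := Finset.mem_image.mpr ⟨ez, hezA, rfl⟩
      have hf0E2 : f0 \ V1 ∈ E2 := Finset.mem_image.mpr ⟨f0, hf0B, rfl⟩
      have hθ1T : θ1 ≤ T1 - 1 := by
        have := h1edge _ hezE1; have := hsuble1 (ez.erase z); linarith
      have hθ2T : θ2 ≤ T2 - 1 := by
        have := h2edge _ hf0E2; have := hsuble2 (f0 \ V1); linarith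
      have hw1V1 : ∀ v, v ∉ V1 → w1 v = 0 := by
        intro v hv
        apply h1supp
        intro e1 he1 hve1
        obtain ⟨e, heA, rfl⟩ := Finset.mem_image.mp he1
        exact hv (hkey e heA hve1)
      have hw1z : w1 z = 0 := hw1V1 z hzV1
      have hw2V1 : ∀ v, v ∈ V1 → w2 v = 0 := by
        intro v hv
        apply h2supp
        intro e2 he2 hve2
        obtain ⟨f, hfB, rfl⟩ := Finset.mem_image.mp he2
        exact (Finset.mem_sdiff.mp hve2).2 hv
      set n1 : ℝ := (V1.card : ℝ) with hn1def
      have hn1 : 0 ≤ n1 := Nat.cast_nonneg _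
      set γ : ℝ := T2 - θ2 with hγdef
      have hγ : 1 ≤ γ := by rw [hγdef]; linarith
      set α : ℝ := γ * n1 + T2 + 1 with hαdef
      have hγn1 : 0 ≤ γ * n1 := mul_nonneg (by linarith) hn1
      have hα : 1 ≤ α := by rw [hαdef]; linarith
      set c : ℝ := α * (T1 - θ1 - 1) + γ * n1 + θ2 + 1 with hcdef
      have hc0 : 0 ≤ c := by
        have h1 : 0 ≤ α * (T1 - θ1 - 1) := mul_nonneg (by linarith) (by linarith)
        rw [hcdef]; linarith
      have hdecomp : ∀ X : Finset V,
          (∑ v ∈ X, (α * w1 v + w2 v + (if v ∈ V1 then γ else 0)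
            + (if v = z then c else 0))) =
          α * (∑ v ∈ X, w1 v) + (∑ v ∈ X, w2 v) + γ * ((X ∩ V1).card : ℝ)
            + (if z ∈ X then c else 0) := by
        intro X
        rw [Finset.sum_add_distrib, Finset.sum_add_distrib, Finset.sum_add_distrib]
        congr 1
        congr 1
        congr 1
        · exact (Finset.mul_sum _ _ _).symm
        · rw [Finset.sum_ite_mem, Finset.sum_const, nsmul_eq_mul, mul_comm]
        · exact Finset.sum_ite_eq' X z (fun _ => c)
      refine ⟨fun v => α * w1 v + w2 v + (if v ∈ V1 then γ else 0)
          + (if v = z then c else 0),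
        max (α*T1 + γ*n1 + θ2) (max (α*T1 + γ*(n1-1) + T2) (c + α*θ1 + γ*(n1-1) + T2)),
        ?_, ?_, ?_, ?_, ?_⟩
      · intro v
        dsimp only
        have h1 := h1pos v
        have h2 := h2pos v
        have h3 : 0 ≤ α * w1 v := mul_nonneg (by linarith) h1
        split_ifs <;> linarith
      · have h1 : 0 ≤ α * T1 := mul_nonneg (by linarith) hT1
        have h2 : (-1 : ℝ) ≤ α*T1 + γ*n1 + θ2 := by linarith
        exact le_trans h2 (le_max_left _ _)
      · intro v hv
        dsimp only
        have hv1 : w1 v = 0 := by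
          apply h1supp
          intro e1 he1 hve1
          obtain ⟨e, heA, rfl⟩ := Finset.mem_image.mp he1
          exact hv e (hAE e heA).1 (Finset.mem_of_mem_erase hve1)
        have hv2 : w2 v = 0 := by
          apply h2supp
          intro e2 he2 hve2
          obtain ⟨f, hfB, rfl⟩ := Finset.mem_image.mp he2
          exact hv f (hBE f hfB).1 (Finset.mem_sdiff.mp hve2).1
        have hvV1 : v ∉ V1 := fun h => hv f0 (hBE f0 hf0B).1 (hV1f f0 hf0B h)
        have hvz : v ≠ z := fun h => hv ez hezE (h ▸ hzez)
        rw [hv1, hv2, if_neg hvV1, if_neg hvz]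
        ring
      · intro e he
        have hAB : e ∈ A ∨ e ∈ B := by
          by_cases hz : z ∈ e
          · exact Or.inl (Finset.mem_filter.mpr ⟨he, hz⟩)
          · exact Or.inr (Finset.mem_filter.mpr ⟨he, hz⟩)
        rw [hdecomp e]
        rcases hAB with heA | heB
        · have hze := (hAE e heA).2
          rw [if_pos hze]
          have hs1 : θ1 + 1 ≤ ∑ v ∈ e, w1 v := by
            have ha1 : ∑ v ∈ e.erase z, w1 v + w1 z = ∑ v ∈ e, w1 v :=
              Finset.sum_erase_add e w1 hze
            have ha2 := h1edge _ (Finset.mem_image.mpr ⟨e, heA, rfl⟩)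
            linarith
          have hs2 : 0 ≤ ∑ v ∈ e, w2 v := Finset.sum_nonneg (fun v _ => h2pos v)
          have hk : (0:ℝ) ≤ ((e ∩ V1).card : ℝ) := Nat.cast_nonneg _
          have hγk : 0 ≤ γ * ((e ∩ V1).card : ℝ) := mul_nonneg (by linarith) hk
          have hαs1 : α * (θ1+1) ≤ α * (∑ v ∈ e, w1 v) :=
            mul_le_mul_of_nonneg_left hs1 (by linarith)
          have hb1 : α*T1 + γ*n1 + θ2 + 1 ≤ c + α*(θ1+1) :=
            le_of_eq (by rw [hcdef]; ring)
          have hb2 : α*T1 + γ*(n1-1) + T2 + 1 ≤ c + α*(θ1+1) :=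
            le_of_eq (by rw [hcdef, hγdef]; ring)
          have hb3 : c + α*θ1 + γ*(n1-1) + T2 + 1 ≤ c + α*(θ1+1) := by
            have hineq : γ*(n1-1) + T2 + 1 ≤ α := by
              rw [hαdef]; have : γ * (n1 - 1) = γ*n1 - γ := by ring
              rw [this]; linarith
            have : c + α*(θ1+1) = c + α*θ1 + α := by ring
            rw [this]; linarith
          have hmax : max (α*T1 + γ*n1 + θ2) (max (α*T1 + γ*(n1-1) + T2)
              (c + α*θ1 + γ*(n1-1) + T2)) + 1 ≤ c + α*(θ1+1) := by
            rw [← max_add_add_right, ← max_add_add_right]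
            exact max_le hb1 (max_le hb2 hb3)
          linarith
        · have hzf := (hBE e heB).2
          have heE := (hBE e heB).1
          rw [if_neg hzf]
          have hfV1 : e ∩ V1 = V1 := Finset.inter_eq_right.mpr (hV1f e heB)
          have hs1 : ∑ v ∈ e, w1 v = T1 :=
            Finset.sum_subset (Finset.subset_univ e)
              (fun x _ hx => hw1V1 x (fun hxV1 => hx (hV1f e heB hxV1)))
          have hs2 : θ2 + 1 ≤ ∑ v ∈ e, w2 v := by
            have ha1 : ∑ v ∈ e \ V1, w2 v = ∑ v ∈ e, w2 v := by
              apply Finset.sum_subset Finset.sdiff_subset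
              intro x hx hx'
              apply hw2V1
              by_contra hxV1
              exact hx' (Finset.mem_sdiff.mpr ⟨hx, hxV1⟩)
            have ha2 := h2edge _ (Finset.mem_image.mpr ⟨e, heB, rfl⟩)
            linarith
          rw [hs1, hfV1, ← hn1def]
          have hb1 : α*T1 + γ*n1 + θ2 + 1 ≤ α*T1 + (θ2+1) + γ*n1 + 0 := by linarith
          have hb2 : α*T1 + γ*(n1-1) + T2 + 1 ≤ α*T1 + (θ2+1) + γ*n1 + 0 :=
            le_of_eq (by rw [hγdef]; ring)
          have hb3 : c + α*θ1 + γ*(n1-1) + T2 + 1 ≤ α*T1 + (θ2+1) + γ*n1 + 0 := by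
            have h1 : γ * (n1 - 1) = γ*n1 - γ := by ring
            have h2 : α*(T1 - θ1 - 1) = α*T1 - α*θ1 - α := by ring
            rw [h1]
            rw [hcdef, h2]
            have h3 : α = γ*n1 + T2 + 1 := hαdef
            linarith
          have hmax : max (α*T1 + γ*n1 + θ2) (max (α*T1 + γ*(n1-1) + T2)
              (c + α*θ1 + γ*(n1-1) + T2)) + 1 ≤ α*T1 + (θ2+1) + γ*n1 + 0 := by
            rw [← max_add_add_right, ← max_add_add_right]
            exact max_le hb1 (max_le hb2 hb3)
          have hw2le : α*T1 + (θ2+1) + γ*n1 + 0 ≤ α*T1 + (∑ v ∈ e, w2 v) + γ*n1 + 0 := by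
            linarith
          linarith
      · intro X hX
        rw [hdecomp X]
        have hs2le : ∑ v ∈ X, w2 v ≤ T2 := hsuble2 X
        have hs1le : ∑ v ∈ X, w1 v ≤ T1 := hsuble1 X
        by_cases hzX : z ∈ X
        · rw [if_pos hzX]
          have hfree1 : ∀ e1 ∈ E1, ¬ e1 ⊆ X ∩ V1 := by
            intro e1 he1 hsub
            obtain ⟨e, heA, rfl⟩ := Finset.mem_image.mp he1
            refine hX e (hAE e heA).1 ?_
            intro x hx
            by_cases hxz : x = z
            · exact hxz ▸ hzX
            · exact Finset.mem_inter.mp (hsub (Finset.mem_erase.mpr ⟨hxz, hx⟩)) |>.1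
          have hs1 : ∑ v ∈ X, w1 v = ∑ v ∈ X ∩ V1, w1 v := by
            symm
            apply Finset.sum_subset Finset.inter_subset_left
            intro x hx hx'
            apply hw1V1
            intro hxV1
            exact hx' (Finset.mem_inter.mpr ⟨hx, hxV1⟩)
          have hs1θ : ∑ v ∈ X ∩ V1, w1 v ≤ θ1 := h1free _ hfree1
          have hne1 : X ∩ V1 ≠ V1 := by
            intro hEq
            apply hfree1 _ hezE1
            rw [hEq]
            exact hkey ez hezA
          have hssub : X ∩ V1 ⊂ V1 := ⟨Finset.inter_subset_right, fun h => hne1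
            (Finset.Subset.antisymm Finset.inter_subset_right (fun x hx => h hx))⟩
          have hklt : (X ∩ V1).card < V1.card := Finset.card_lt_card hssub
          have hkle : ((X ∩ V1).card : ℝ) ≤ n1 - 1 := by
            have h' : (X ∩ V1).card + 1 ≤ V1.card := hklt
            have h'' : (((X ∩ V1).card : ℝ) + 1) ≤ (V1.card : ℝ) := by exact_mod_cast h'
            rw [hn1def]; linarith
          have hαs1 : α * (∑ v ∈ X, w1 v) ≤ α * θ1 := by
            rw [hs1]
            exact mul_le_mul_of_nonneg_left hs1θ (by linarith)
          have hγk : γ * ((X ∩ V1).card : ℝ) ≤ γ * (n1 - 1) :=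
            mul_le_mul_of_nonneg_left hkle (by linarith)
          have hfin : α * (∑ v ∈ X, w1 v) + (∑ v ∈ X, w2 v) + γ * ((X ∩ V1).card : ℝ) + c
              ≤ c + α*θ1 + γ*(n1-1) + T2 := by linarith
          exact le_trans hfin (le_trans (le_max_right _ _) (le_max_right _ _))
        · rw [if_neg hzX, add_zero]
          by_cases hV1X : V1 ⊆ X
          · have hfree2 : ∀ e2 ∈ E2, ¬ e2 ⊆ X := by
              intro e2 he2 hsub
              obtain ⟨f, hfB, rfl⟩ := Finset.mem_image.mp he2
              refine hX f (hBE f hfB).1 ?_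
              intro x hx
              by_cases hxV1 : x ∈ V1
              · exact hV1X hxV1
              · exact hsub (Finset.mem_sdiff.mpr ⟨hx, hxV1⟩)
            have hs2θ : ∑ v ∈ X, w2 v ≤ θ2 := h2free _ hfree2
            have hXV1 : X ∩ V1 = V1 := Finset.inter_eq_right.mpr hV1X
            rw [hXV1, ← hn1def]
            have hαs1 : α * (∑ v ∈ X, w1 v) ≤ α * T1 :=
              mul_le_mul_of_nonneg_left hs1le (by linarith)
            have hfin : α * (∑ v ∈ X, w1 v) + (∑ v ∈ X, w2 v) + γ * n1
                ≤ α*T1 + γ*n1 + θ2 := by linarith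
            exact le_trans hfin (le_max_left _ _)
          · have hne1 : X ∩ V1 ≠ V1 := by
              intro hEq
              apply hV1X
              intro x hx
              rw [← hEq] at hx
              exact (Finset.mem_inter.mp hx).1
            have hssub : X ∩ V1 ⊂ V1 := ⟨Finset.inter_subset_right, fun h => hne1
              (Finset.Subset.antisymm Finset.inter_subset_right (fun x hx => h hx))⟩
            have hklt : (X ∩ V1).card < V1.card := Finset.card_lt_card hssub
            have hkle : ((X ∩ V1).card : ℝ) ≤ n1 - 1 := by
              have h' : (X ∩ V1).card + 1 ≤ V1.card := hklt
              have h'' : (((X ∩ V1).card : ℝ) + 1) ≤ (V1.card : ℝ) := by exact_mod_cast h'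
              rw [hn1def]; linarith
            have hαs1 : α * (∑ v ∈ X, w1 v) ≤ α * T1 :=
              mul_le_mul_of_nonneg_left hs1le (by linarith)
            have hγk : γ * ((X ∩ V1).card : ℝ) ≤ γ * (n1 - 1) :=
              mul_le_mul_of_nonneg_left hkle (by linarith)
            have hfin : α * (∑ v ∈ X, w1 v) + (∑ v ∈ X, w2 v) + γ * ((X ∩ V1).card : ℝ)
                ≤ α*T1 + γ*(n1-1) + T2 := by linarith
            exact le_trans hfin (le_trans (le_max_left _ _) (le_max_right _ _))

private lemma cutset_has_min_aux (G : SimpleGraph V) :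
    ∀ (n : ℕ) (S : Finset V), S.card ≤ n → G.IsCutset S →
      ∃ S' ⊆ S, G.IsMinCutset S' := by
  intro n
  induction n with
  | zero =>
    intro S hc hcut
    have hS : S = ∅ := Finset.card_eq_zero.mp (by omega)
    subst hS
    exact ⟨∅, Finset.Subset.refl _, hcut,
      fun S' hS' _ => Finset.subset_empty.mp hS'⟩
  | succ n ih =>
    intro S hc hcut
    by_cases hmin : ∀ S' ⊆ S, G.IsCutset S' → S' = S
    · exact ⟨S, Finset.Subset.refl _, hcut, hmin⟩
    · push_neg at hmin
      obtain ⟨S', hsub, hcut', hne⟩ := hmin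
      have hss : S' ⊂ S := Finset.ssubset_iff_subset_ne.mpr ⟨hsub, hne⟩
      have hcard : S'.card ≤ n := by
        have := Finset.card_lt_card hss
        omega
      obtain ⟨S'', hsub'', hmin''⟩ := ih S' hcard hcut'
      exact ⟨S'', hsub''.trans hsub, hmin''⟩

private lemma cd_char (G : SimpleGraph V) [Nonempty V] (D : Finset V) :
    G.IsCDSet D ↔ D.Nonempty ∧ ∀ S, G.IsMinCutset S → ¬ S ⊆ Finset.univ \ D := by
  constructor
  · rintro ⟨hdom, hcon⟩
    constructor
    · obtain ⟨v0⟩ := ‹Nonempty V›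
      rcases hdom v0 with h | ⟨u, hu, _⟩
      · exact ⟨v0, h⟩
      · exact ⟨u, hu⟩
    · rintro S ⟨⟨u, v, huS, hvS, huv, hwalk⟩, _⟩ hsub
      have hDS : ∀ x ∈ D, x ∉ S := fun x hx hxS =>
        (Finset.mem_sdiff.mp (hsub hxS)).2 hx
      have hget : ∀ x : V, ∃ y ∈ D, ∃ p : G.Walk y x,
          ∀ t ∈ p.support, t = x ∨ t ∈ D := by
        intro x
        rcases hdom x with hxD | ⟨y, hyD, hadj⟩
        · refine ⟨x, hxD, Walk.nil, ?_⟩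
          intro t ht
          rw [Walk.support_nil] at ht
          simp at ht
          exact Or.inl ht
        · refine ⟨y, hyD, Walk.cons hadj Walk.nil, ?_⟩
          intro t ht
          rw [Walk.support_cons, Walk.support_nil] at ht
          simp at ht
          rcases ht with rfl | rfl
          · exact Or.inr hyD
          · exact Or.inl rfl
      obtain ⟨u', hu'D, p1, hp1⟩ := hget u
      obtain ⟨v', hv'D, p2, hp2⟩ := hget v
      obtain ⟨pm, hpm⟩ := hcon u' hu'D v' hv'D
      obtain ⟨x, hxq, hxS⟩ := hwalk (p1.reverse.append (pm.append p2))
      rw [Walk.mem_support_append_iff, Walk.mem_support_append_iff] at hxq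
      rcases hxq with hx1 | hx2 | hx3
      · rw [Walk.support_reverse, List.mem_reverse] at hx1
        rcases hp1 x hx1 with rfl | hxD
        · exact huS hxS
        · exact hDS x hxD hxS
      · exact hDS x (hpm x hx2) hxS
      · rcases hp2 x hx3 with rfl | hxD
        · exact hvS hxS
        · exact hDS x hxD hxS
  · rintro ⟨hne, hmin⟩
    have hnocut : ∀ S, G.IsCutset S → ¬ S ⊆ Finset.univ \ D := by
      intro S hcut hsub
      obtain ⟨S', hS'sub, hS'min⟩ := cutset_has_min_aux G S.card S (le_refl _) hcut
      exact hmin S' hS'min (hS'sub.trans hsub)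
    constructor
    · intro v
      by_contra hv
      push_neg at hv
      obtain ⟨hvD, hvadj⟩ := hv
      obtain ⟨u0, hu0⟩ := hne
      have hvu0 : v ≠ u0 := fun h => hvD (h ▸ hu0)
      classical
      have hmemN : ∀ x : V, x ∈ Finset.univ.filter (fun y => G.Adj v y) ↔ G.Adj v x := by
        intro x; simp
      refine hnocut (Finset.univ.filter (fun y => G.Adj v y))
        ⟨v, u0, ?_, ?_, hvu0, ?_⟩ ?_
      · intro h
        exact G.irrefl ((hmemN v).mp h)
      · intro h
        exact hvadj u0 hu0 (G.adj_symm ((hmemN u0).mp h))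
      · intro p
        cases p with
        | nil => exact absurd rfl hvu0
        | @cons _ b _ hadj q =>
          refine ⟨b, ?_, (hmemN b).mpr hadj⟩
          rw [Walk.support_cons]
          exact List.mem_cons_of_mem _ q.start_mem_support
      · intro x hx
        rw [Finset.mem_sdiff]
        exact ⟨Finset.mem_univ x,
          fun hxD => hvadj x hxD (G.adj_symm ((hmemN x).mp hx))⟩
    · intro u hu v hv
      by_cases huv : u = v
      · subst huv
        refine ⟨Walk.nil, ?_⟩
        intro x hx
        rw [Walk.support_nil] at hx
        simp at hx
        subst hx
        exact hu
      · by_contra hno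
        push_neg at hno
        refine hnocut (Finset.univ \ D) ⟨u, v, ?_, ?_, huv, ?_⟩ (Finset.Subset.refl _)
        · simp [hu]
        · simp [hv]
        · intro p
          obtain ⟨x, hxp, hxD⟩ := hno p
          exact ⟨x, hxp, Finset.mem_sdiff.mpr ⟨Finset.mem_univ x, hxD⟩⟩

/-- If the cutset hypergraph of `G` is 1-Sperner, then `G` is connected-domishold. -/
theorem oneSperner_cutsetHypergraph_connectedDomishold (G : SimpleGraph V)
    (h : HypOneSperner (G.IsMinCutset)) : G.ConnectedDomishold := by
  classical
  by_cases hcd : ∃ D : Finset V, G.IsCDSet D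
  · obtain ⟨D0, hD0⟩ := hcd
    rcases isEmpty_or_nonempty V with hemp | hne
    · refine ⟨fun _ => 0, 0, fun v => le_refl 0, le_refl 0, fun S => ?_⟩
      rw [Finset.sum_const_zero]
      constructor
      · intro _
        exact ⟨fun v => (hemp.false v).elim, fun u => (hemp.false u).elim⟩
      · intro _; exact le_refl 0
    · set E : Finset (Finset V) := Finset.univ.filter (fun S => G.IsMinCutset S) with hEdef
      have hmemE : ∀ S, S ∈ E ↔ G.IsMinCutset S := by
        intro S; simp [hEdef]
      have hsp' : ∀ e ∈ E, ∀ f ∈ E, e ≠ f → min (e \ f).card (f \ e).card = 1 :=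
        fun e he f hf hef => h e f ((hmemE e).mp he) ((hmemE f).mp hf) hef
      obtain ⟨w, θ, hpos, hθ1, hsupp, hedge, hfree⟩ :=
        key_lemma (∑ e ∈ E, e.card) E (le_refl _) hsp'
      by_cases hEe : E = ∅
      · refine ⟨fun _ => 1, 1, fun v => by norm_num, by norm_num, fun S => ?_⟩
        have hsum : ∑ _x ∈ S, (1:ℝ) = (S.card : ℝ) := by
          rw [Finset.sum_const, nsmul_eq_mul, mul_one]
        rw [hsum, cd_char G S]
        constructor
        · intro h1
          refine ⟨Finset.card_pos.mp (Nat.one_le_cast.mp h1), ?_⟩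
          intro S' hS' _
          have hS'E : S' ∈ E := (hmemE S').mpr hS'
          rw [hEe] at hS'E
          exact absurd hS'E (Finset.notMem_empty S')
        · rintro ⟨hne', _⟩
          exact Nat.one_le_cast.mpr (Finset.card_pos.mpr hne')
      · obtain ⟨e0, he0⟩ := Finset.nonempty_iff_ne_empty.mpr hEe
        set T : ℝ := ∑ v ∈ Finset.univ, w v with hTdef
        have hTe0 : θ + 1 ≤ T := by
          have h1 := hedge e0 he0
          have h2 : ∑ v ∈ e0, w v ≤ T :=
            Finset.sum_le_sum_of_subset_of_nonneg (Finset.subset_univ _)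
              (fun i _ _ => hpos i)
          linarith
        refine ⟨w, T - θ - 1/2, hpos, by linarith, fun D => ?_⟩
        have hsplit : ∑ v ∈ Finset.univ \ D, w v + ∑ v ∈ D, w v = T :=
          Finset.sum_sdiff (Finset.subset_univ D)
        rw [cd_char G D]
        constructor
        · intro hsum
          constructor
          · rw [Finset.nonempty_iff_ne_empty]
            rintro rfl
            rw [Finset.sum_empty] at hsum
            linarith
          · intro S hS hsub
            have h1 := hedge S ((hmemE S).mpr hS)
            have h2 : ∑ v ∈ S, w v ≤ ∑ v ∈ Finset.univ \ D, w v :=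
              Finset.sum_le_sum_of_subset_of_nonneg hsub (fun i _ _ => hpos i)
            linarith
        · rintro ⟨hDne, hminfree⟩
          have h2 := hfree (Finset.univ \ D)
            (fun e he => hminfree e ((hmemE e).mp he))
          linarith
  · push_neg at hcd
    refine ⟨fun _ => 0, 1, fun v => le_refl 0, by norm_num, fun S => ?_⟩
    rw [Finset.sum_const_zero]
    constructor
    · intro h1; linarith
    · intro hS; exact absurd hS (hcd S)
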